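/- With the Hodge operator on S³ defined by ∗_H(ω_a) = (1/2)ε_{abc} ω_b ∧ ω_c and ∗_H(ω_a ∧ ω_b) = ε_{abc} ω_c, and the connection α = λ ω_a ⊗ T_a with curvature F = (λ/2)(λ−1)ε_{abc} ω_a ∧ ω_b ⊗ T_c, one has ∗_H F = (λ − 1)α and D(∗_H F) = d(∗_H F) + [α, ∗_H F] = λ(λ−1)(λ − 1/2) ε_{abc} ω_a ∧ ω_b ⊗ T_c. In particular the Yang–Mills equation D(∗_H F) = 0 holds if and only if λ ∈ {0, 1/2, 1}. -/

import Mathlib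

noncomputable section

/-- Levi-Civita symbol `ε_{abc}` on three indices. -/
def eps (a b c : Fin 3) : ℂ :=
  ((((b : ℤ) - (a : ℤ)) * ((c : ℤ) - (b : ℤ)) * ((c : ℤ) - (a : ℤ)) : ℤ) : ℂ) / 2

/-- The standard `su(2)` generators in the fundamental representation. -/
def Tmat : Fin 3 → Matrix (Fin 2) (Fin 2) ℂ :=
  ![(1 / 2 : ℂ) • !![0, Complex.I; Complex.I, 0],
    (1 / 2 : ℂ) • !![0, -1; 1, 0],
    (1 / 2 : ℂ) • !![Complex.I, 0; 0, -Complex.I]]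

set_option maxHeartbeats 4000000 in
/-- With the round Hodge operator on `S³` (`∗ω_a = (1/2)ε_{abc}ω_b∧ω_c`,
`∗(ω_a∧ω_b) = ε_{abc}ω_c`) and the connection `α = λ ω_a ⊗ T_a` with curvature
`F = (λ/2)(λ−1)ε_{abc} ω_a∧ω_b ⊗ T_c`, one has `∗F = (λ−1)α` and
`D(∗F) = d(∗F) + [α, ∗F] = λ(λ−1)(λ−1/2) ε_{abc} ω_a∧ω_b ⊗ T_c`; the Yang–Mills
equation `D(∗F) = 0` holds iff `λ ∈ {0, 1/2, 1}`. -/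
theorem stmt_11 {W : Type*} [Ring W] [Algebra ℂ W]
    (ω : Fin 3 → W)
    (hanti : ∀ a b, ω a * ω b = -(ω b * ω a))
    (d hodge : W →ₗ[ℂ] W)
    (hMC : ∀ a, d (ω a) = ∑ b, ∑ c, (-(1 : ℂ) / 2 * eps a b c) • (ω b * ω c))
    (hH1 : ∀ a, hodge (ω a) = ∑ b, ∑ c, ((1 : ℂ) / 2 * eps a b c) • (ω b * ω c))
    (hH2 : ∀ a b, hodge (ω a * ω b) = ∑ c, eps a b c • ω c)
    (l : ℝ) :
    let α : Matrix (Fin 2) (Fin 2) W :=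
      Matrix.of fun i j => ∑ a, ((l : ℂ) * Tmat a i j) • ω a
    let F : Matrix (Fin 2) (Fin 2) W := α.map d + α * α
    let X : Matrix (Fin 2) (Fin 2) W :=
      Matrix.of fun i j => ∑ a, ∑ b, ∑ c, (eps a b c * Tmat c i j) • (ω a * ω b)
    let DHF : Matrix (Fin 2) (Fin 2) W :=
      (F.map hodge).map d + α * F.map hodge + F.map hodge * α
    (F.map hodge = Matrix.of fun i j => ∑ a, (((l : ℂ) - 1) * (l : ℂ) * Tmat a i j) • ω a) ∧
    (DHF = ((l : ℂ) * ((l : ℂ) - 1) * ((l : ℂ) - 1 / 2)) • X) ∧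
    (X ≠ 0 → (DHF = 0 ↔ l = 0 ∨ l = 1 / 2 ∨ l = 1)) := by
  intro α F X DHF
  have hsq : ∀ a, ω a * ω a = 0 := by
    intro a
    have h2 : ω a * ω a + ω a * ω a = 0 := by
      nth_rewrite 2 [hanti a a]; exact add_neg_cancel _
    have h3 : ω a * ω a = (1/2 : ℂ) • (ω a * ω a + ω a * ω a) := by module
    rw [h3, h2, smul_zero]
  have h10 := hanti 1 0
  have h20 := hanti 2 0
  have h21 := hanti 2 1
  have hFmap : F.map hodge =
      Matrix.of fun i j => ∑ a, (((l : ℂ) - 1) * (l : ℂ) * Tmat a i j) • ω a := by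
    ext i j
    fin_cases i <;> fin_cases j <;>
    · simp only [F, α, Matrix.map_apply, Matrix.add_apply, Matrix.mul_apply, Matrix.of_apply,
        Fin.sum_univ_three, Fin.sum_univ_two, Finset.sum_mul, Finset.mul_sum,
        smul_mul_assoc, mul_smul_comm, mul_add, add_mul, map_add, map_smul, map_sum, hMC, hH2,
        smul_smul, Finset.smul_sum, Matrix.smul_apply, hsq, smul_zero]
      simp only [eps, Tmat]
      norm_num [Matrix.cons_val_zero, Matrix.cons_val_one, Matrix.head_cons, Matrix.smul_apply]
      match_scalars <;> (try ring1) <;> (ring_nf; simp [Complex.I_sq]; try ring) <;> (simp only [Complex.I_sq]; ring)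
  have hDHF : DHF = ((l : ℂ) * ((l : ℂ) - 1) * ((l : ℂ) - 1 / 2)) • X := by
    have : DHF = (Matrix.of fun i j =>
          ∑ a, (((l : ℂ) - 1) * (l : ℂ) * Tmat a i j) • ω a).map d
        + α * Matrix.of (fun i j => ∑ a, (((l : ℂ) - 1) * (l : ℂ) * Tmat a i j) • ω a)
        + Matrix.of (fun i j => ∑ a, (((l : ℂ) - 1) * (l : ℂ) * Tmat a i j) • ω a) * α := by
      simp only [DHF, hFmap]
    rw [this]
    ext i j
    fin_cases i <;> fin_cases j <;>
    · simp only [α, X, Matrix.map_apply, Matrix.add_apply, Matrix.mul_apply, Matrix.of_apply,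
        Fin.sum_univ_three, Fin.sum_univ_two, Finset.sum_mul, Finset.mul_sum,
        smul_mul_assoc, mul_smul_comm, mul_add, add_mul, map_add, map_smul, map_sum, hMC,
        smul_smul, Finset.smul_sum, Matrix.smul_apply, hsq, smul_zero, h10, h20, h21,
        smul_neg, mul_neg, neg_neg]
      simp only [eps, Tmat]
      norm_num [Matrix.cons_val_zero, Matrix.cons_val_one, Matrix.head_cons, Matrix.smul_apply]
      match_scalars <;> (try ring1) <;> (ring_nf; simp [Complex.I_sq]; try ring) <;> (simp only [Complex.I_sq]; ring)
  refine ⟨hFmap, hDHF, ?_⟩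
  intro hX
  set μ : ℂ := (l : ℂ) * ((l : ℂ) - 1) * ((l : ℂ) - 1 / 2) with hμdef
  constructor
  · intro h0
    rw [hDHF] at h0
    have hμ : μ = 0 := by
      by_contra hμ
      exact hX (by
        calc X = μ⁻¹ • (μ • X) := by rw [smul_smul, inv_mul_cancel₀ hμ, one_smul]
        _ = 0 := by rw [h0, smul_zero])
    rcases mul_eq_zero.mp hμ with h | h
    · rcases mul_eq_zero.mp h with h | h
      · left; exact_mod_cast h
      · right; right
        have : (l : ℂ) = 1 := by linear_combination h
        exact_mod_cast this
    · right; left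
      have : (l : ℂ) = ((1 / 2 : ℝ) : ℂ) := by push_cast; linear_combination h
      exact_mod_cast this
  · intro h
    rw [hDHF]
    have hμ : μ = 0 := by
      rcases h with h | h | h <;> subst h <;> simp [hμdef] <;> norm_num
    rw [hμ, zero_smul]
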